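/- Any 3-term P of maximal size in a simple graph G (i.e., G admits a 3-term but no 4-term) satisfies I(P) = J(P). -/

import Mathlib

/-- `P` is a term: a set of pairs which are all edges of `G`, with pairwise
distinct first coordinates and pairwise distinct second coordinates. -/
def IsTerm (N : ℕ) (G : SimpleGraph (Fin N)) (P : Finset (Fin N × Fin N)) : Prop :=
  (∀ p ∈ P, G.Adj p.1 p.2) ∧
    (P.image Prod.fst).card = P.card ∧ (P.image Prod.snd).card = P.card

/-- Inserting a new edge with fresh endpoints extends a term. -/
lemma extend_term (N : ℕ) (G : SimpleGraph (Fin N)) (P : Finset (Fin N × Fin N))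
    (hP : IsTerm N G P) (s : Fin N × Fin N) (hs : G.Adj s.1 s.2)
    (h1 : s.1 ∉ P.image Prod.fst) (h2 : s.2 ∉ P.image Prod.snd) :
    IsTerm N G (insert s P) ∧ (insert s P).card = P.card + 1 := by
  obtain ⟨hadj, hf, hg⟩ := hP
  have hsP : s ∉ P := fun h => h1 (Finset.mem_image_of_mem _ h)
  have hcard : (insert s P).card = P.card + 1 := Finset.card_insert_of_notMem hsP
  refine ⟨⟨?_, ?_, ?_⟩, hcard⟩
  · intro p hp
    rcases Finset.mem_insert.mp hp with h | h
    · exact h ▸ hs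
    · exact hadj p h
  · rw [Finset.image_insert, Finset.card_insert_of_notMem h1, hf, hcard]
  · rw [Finset.image_insert, Finset.card_insert_of_notMem h2, hg, hcard]

/-- Four edges with pairwise distinct sources and pairwise distinct targets
form a 4-term. -/
lemma isTerm4 (N : ℕ) (G : SimpleGraph (Fin N)) (p q r s : Fin N × Fin N)
    (hp : G.Adj p.1 p.2) (hq : G.Adj q.1 q.2) (hr : G.Adj r.1 r.2) (hs : G.Adj s.1 s.2)
    (f12 : p.1 ≠ q.1) (f13 : p.1 ≠ r.1) (f14 : p.1 ≠ s.1)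
    (f23 : q.1 ≠ r.1) (f24 : q.1 ≠ s.1) (f34 : r.1 ≠ s.1)
    (g12 : p.2 ≠ q.2) (g13 : p.2 ≠ r.2) (g14 : p.2 ≠ s.2)
    (g23 : q.2 ≠ r.2) (g24 : q.2 ≠ s.2) (g34 : r.2 ≠ s.2) :
    IsTerm N G {p, q, r, s} ∧ ({p, q, r, s} : Finset (Fin N × Fin N)).card = 4 := by
  have e12 : p ≠ q := fun h => f12 (by rw [h])
  have e13 : p ≠ r := fun h => f13 (by rw [h])
  have e14 : p ≠ s := fun h => f14 (by rw [h])
  have e23 : q ≠ r := fun h => f23 (by rw [h])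
  have e24 : q ≠ s := fun h => f24 (by rw [h])
  have e34 : r ≠ s := fun h => f34 (by rw [h])
  have hc : ({p, q, r, s} : Finset (Fin N × Fin N)).card = 4 := by
    rw [Finset.card_insert_of_notMem (by simp [e12, e13, e14]),
      Finset.card_insert_of_notMem (by simp [e23, e24]),
      Finset.card_insert_of_notMem (by simp [e34]), Finset.card_singleton]
  refine ⟨⟨?_, ?_, ?_⟩, hc⟩
  · intro x hx
    simp only [Finset.mem_insert, Finset.mem_singleton] at hx
    rcases hx with h | h | h | h <;> subst h <;> assumption
  · rw [hc]
    rw [Finset.image_insert, Finset.image_insert, Finset.image_insert,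
      Finset.image_singleton,
      Finset.card_insert_of_notMem (by simp [f12, f13, f14]),
      Finset.card_insert_of_notMem (by simp [f23, f24]),
      Finset.card_insert_of_notMem (by simp [f34]), Finset.card_singleton]
  · rw [hc]
    rw [Finset.image_insert, Finset.image_insert, Finset.image_insert,
      Finset.image_singleton,
      Finset.card_insert_of_notMem (by simp [g12, g13, g14]),
      Finset.card_insert_of_notMem (by simp [g23, g24]),
      Finset.card_insert_of_notMem (by simp [g34]), Finset.card_singleton]

theorem three_term_maximal_eq_supports (N : ℕ) (G : SimpleGraph (Fin N))
    (P : Finset (Fin N × Fin N)) (hP : IsTerm N G P) (hcard : P.card = 3)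
    (hmax : ¬ ∃ Q : Finset (Fin N × Fin N), IsTerm N G Q ∧ Q.card = 4) :
    P.image Prod.fst = P.image Prod.snd := by
  by_contra hne
  have hadj := hP.1
  have hinj1 : Set.InjOn Prod.fst (↑P : Set (Fin N × Fin N)) := Finset.card_image_iff.mp hP.2.1
  have hinj2 : Set.InjOn Prod.snd (↑P : Set (Fin N × Fin N)) := Finset.card_image_iff.mp hP.2.2
  -- get p ∈ P with p.1 ∉ J
  have hxf : ∃ x ∈ P.image Prod.fst, x ∉ P.image Prod.snd := by
    by_contra h
    push_neg at h
    exact hne (Finset.eq_of_subset_of_card_le h (by rw [hP.2.1, hP.2.2]))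
  obtain ⟨x, hxI, hxJ⟩ := hxf
  obtain ⟨p, hpP, hpx⟩ := Finset.mem_image.mp hxI
  subst hpx
  have hpadj := hadj p hpP
  by_cases hb : p.2 ∈ P.image Prod.fst
  swap
  · -- Case A : flip p
    obtain ⟨h1, h2⟩ := extend_term N G P hP (p.2, p.1) (G.adj_symm hpadj) hb hxJ
    exact hmax ⟨_, h1, by rw [h2, hcard]⟩
  -- get q ∈ P with q.2 ∉ I
  have hxg : ∃ y ∈ P.image Prod.snd, y ∉ P.image Prod.fst := by
    by_contra h
    push_neg at h
    exact hne (Finset.eq_of_subset_of_card_le h (by rw [hP.2.1, hP.2.2])).symm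
  obtain ⟨y, hyJ, hyI⟩ := hxg
  obtain ⟨q, hqP, hqy⟩ := Finset.mem_image.mp hyJ
  subst hqy
  have hqadj := hadj q hqP
  have hpq : p ≠ q := fun h => hyI (h ▸ hb)
  by_cases hc : q.1 ∈ P.image Prod.snd
  swap
  · -- Case B1 : flip q
    obtain ⟨h1, h2⟩ := extend_term N G P hP (q.2, q.1) (G.adj_symm hqadj) hyI hc
    exact hmax ⟨_, h1, by rw [h2, hcard]⟩
  -- w ∈ P with w.1 = p.2
  obtain ⟨w, hwP, hw1⟩ := Finset.mem_image.mp hb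
  have hwadj := hadj w hwP
  have hwp : w ≠ p := fun h => G.ne_of_adj hpadj (by rw [← hw1, h])
  by_cases hwq : w = q
  · -- Case (i) : p.2 = q.1, flip the third element r
    subst hwq
    -- extract the third element r
    have hsub : ({p, w} : Finset (Fin N × Fin N)) ⊆ P := by
      intro z hz
      rcases Finset.mem_insert.mp hz with h | h
      · exact h ▸ hpP
      · exact (Finset.mem_singleton.mp h) ▸ hwP
    have hne3 : (P \ {p, w}).Nonempty := by
      rw [← Finset.card_pos, Finset.card_sdiff_of_subset hsub, hcard,
        Finset.card_insert_of_notMem (by simp [hpq]), Finset.card_singleton]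
      omega
    obtain ⟨r, hr⟩ := hne3
    rw [Finset.mem_sdiff, Finset.mem_insert, Finset.mem_singleton] at hr
    obtain ⟨hrP, hrne⟩ := hr
    push_neg at hrne
    obtain ⟨hrp, hrw⟩ := hrne
    have hradj := hadj r hrP
    -- P = {p, w, r}
    have hPeq : P = {p, w, r} := by
      refine (Finset.eq_of_subset_of_card_le ?_ ?_).symm
      · intro z hz
        rcases Finset.mem_insert.mp hz with h | h
        · exact h ▸ hpP
        rcases Finset.mem_insert.mp h with h | h
        · exact h ▸ hwP
        · exact (Finset.mem_singleton.mp h) ▸ hrP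
      · rw [hcard]
        rw [Finset.card_insert_of_notMem (by simp [hpq, Ne.symm hrp]),
          Finset.card_insert_of_notMem (by simp [Ne.symm hrw]), Finset.card_singleton]
    -- r.2 ∉ I, r.1 ∉ J
    have hrf : r.2 ∉ P.image Prod.fst := by
      rw [hPeq]
      simp only [Finset.image_insert, Finset.image_singleton, Finset.mem_insert,
        Finset.mem_singleton]
      push_neg
      refine ⟨?_, ?_, (G.ne_of_adj hradj).symm⟩
      · -- r.2 ≠ p.1 since p.1 ∉ J but r.2 ∈ J
        intro h
        exact hxJ (h ▸ Finset.mem_image_of_mem Prod.snd hrP)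
      · -- r.2 ≠ w.1 = p.2 : InjOn snd (r ≠ p)
        rw [hw1]
        intro h
        exact hrp (hinj2 hrP hpP h)
    have hrg : r.1 ∉ P.image Prod.snd := by
      rw [hPeq]
      simp only [Finset.image_insert, Finset.image_singleton, Finset.mem_insert,
        Finset.mem_singleton]
      push_neg
      refine ⟨?_, ?_, G.ne_of_adj hradj⟩
      · -- r.1 ≠ p.2 = w.1 : InjOn fst (r ≠ w)
        rw [← hw1]
        intro h
        exact hrw (hinj1 hrP hwP h)
      · -- r.1 ≠ w.2 since w.2 ∉ I but r.1 ∈ I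
        intro h
        exact hyI (h ▸ Finset.mem_image_of_mem Prod.fst hrP)
    obtain ⟨h1, h2⟩ := extend_term N G P hP (r.2, r.1) (G.adj_symm hradj) hrf hrg
    exact hmax ⟨_, h1, by rw [h2, hcard]⟩
  · -- Case (ii) : p.2 = w.1, and we show q.1 = w.2; then use two 2-cycles
    obtain ⟨v, hvP, hv2⟩ := Finset.mem_image.mp hc
    have hvq : v ≠ q := fun h => G.ne_of_adj hqadj (by rw [← hv2, h]) |>.elim
    have hvp : v ≠ p := by
      intro h
      subst h
      -- then q.1 = v.2 = p.2 = w.1 so q = w by InjOn fst, contradiction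
      exact hwq (hinj1 hwP hqP (by rw [hw1, hv2]))
    have hvw : v = w := by
      by_contra hvw
      have hsub4 : ({v, w, p, q} : Finset (Fin N × Fin N)) ⊆ P := by
        intro z hz
        simp only [Finset.mem_insert, Finset.mem_singleton] at hz
        rcases hz with h | h | h | h
        · exact h ▸ hvP
        · exact h ▸ hwP
        · exact h ▸ hpP
        · exact h ▸ hqP
      have h4 : ({v, w, p, q} : Finset (Fin N × Fin N)).card = 4 := by
        rw [Finset.card_insert_of_notMem (by simp [hvw, hvp, hvq]),
          Finset.card_insert_of_notMem (by simp [hwp, hwq]),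
          Finset.card_insert_of_notMem (by simp [hpq]), Finset.card_singleton]
      have := Finset.card_le_card hsub4
      rw [h4, hcard] at this
      omega
    subst hvw
    -- now w.1 = p.2 and w.2 = q.1
    have hd : p.1 ≠ q.2 := fun h => hyI (h ▸ Finset.mem_image_of_mem Prod.fst hpP)
    have hbc : p.2 ≠ q.1 := by
      rw [← hw1, ← hv2]
      exact G.ne_of_adj hwadj
    obtain ⟨h1, h2⟩ := isTerm4 N G p (p.2, p.1) q (q.2, q.1)
      hpadj (G.adj_symm hpadj) hqadj (G.adj_symm hqadj)
      (G.ne_of_adj hpadj)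
      (fun h => hpq (hinj1 hpP hqP h))
      hd
      hbc
      (fun h => hpq (hinj2 hpP hqP h))
      (G.ne_of_adj hqadj)
      (G.ne_of_adj hpadj).symm
      (fun h => hpq (hinj2 hpP hqP h))
      hbc
      hd
      (fun h => hpq (hinj1 hpP hqP h))
      (G.ne_of_adj hqadj).symm
    exact hmax ⟨_, h1, h2⟩
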